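/- Let F be a field, k ≥ 1, and let f = Σ_{j=1}^t c_j w_j ∈ F⟨x₀, x₁⟩ be a polynomial with nonzero coefficients c_j and distinct words w_j. Let D = deg f, and suppose there is a word w₁ of length D with nonzero coefficient and an increasing k-sequence I in {1,...,D} such that every other word of f of length D differs from w₁ at some position in I. Let M_{x₀}, M_{x₁} be the (k+1)×(k+1) bidiagonal substitution matrices over R = F[ξ₁,...,ξ_{k+1}, y_{0,1},y_{1,1},...,y_{0,k},y_{1,k}] (diagonals ξ_i, superdiagonal of M_{x_b} equal to y_{b,i}). Then the (1, k+1) entry of f(M_{x₀}, M_{x₁}) is a nonzero polynomial in R; in fact the coefficient of the monomial ξ_I · y_{b_{i₁},1} ⋯ y_{b_{i_k},k} (determined by w₁ and I) in that entry equals c₁. -/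

import Mathlib

noncomputable section
open MvPolynomial

/-- The variables of the commutative polynomial ring
`R = F[ξ₁,…,ξ_{k+1}, y_{0,1}, y_{1,1}, …, y_{0,k}, y_{1,k}]`:
`Sum.inl i` is the block variable `ξ_{i+1}`, and `Sum.inr (b, ℓ)` is the
index variable `y_{b,ℓ+1}`. -/
abbrev SubVar (k : ℕ) := Fin (k + 1) ⊕ Bool × Fin k

/-- The `(k+1) × (k+1)` upper bidiagonal substitution matrix `M_{x_b}`:
diagonal entries `ξ_i`, superdiagonal entries `y_{b,i}`, zeros elsewhere. -/
def subMat (F : Type*) [Field F] (k : ℕ) (b : Bool) :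
    Matrix (Fin (k + 1)) (Fin (k + 1)) (MvPolynomial (SubVar k) F) :=
  Matrix.of fun i j =>
    if i = j then X (Sum.inl i)
    else if h : (i : ℕ) + 1 = (j : ℕ) then
      X (Sum.inr (b, ⟨i, by have := j.isLt; omega⟩))
    else 0

/-- The exponent of the block variable `ξ_{i+1}` in the monomial `ξ_J` associated to a
strictly increasing sequence `J = (j₁ < ⋯ < j_k)` of positions in `{1,…,D}` (here
`J : Fin k → Fin D` is 0-based, with `j_{ℓ+1} = J ℓ + 1`): the exponent vector is
`(j₁ − 1, j₂ − j₁ − 1, …, j_k − j_{k−1} − 1, D − j_k)`. -/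
def xiExp (k D : ℕ) (J : Fin k → Fin D) (i : Fin (k + 1)) : ℕ :=
  (if h : (i : ℕ) < k then (J ⟨i, h⟩ : ℕ) + 1 else D + 1)
    - (if h : 0 < (i : ℕ) then (J ⟨(i : ℕ) - 1, by have := i.isLt; omega⟩ : ℕ) + 1 else 0)
    - 1

/-- Evaluation of a bivariate noncommutative polynomial `f ∈ F⟨x₀,x₁⟩` (modeled as the
monoid algebra of the free monoid on `Bool`) at the substitution matrices, via the
`F`-algebra homomorphism `x_b ↦ M_{x_b}`. -/
def evalSub (F : Type*) [Field F] (k : ℕ) :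
    MonoidAlgebra F (FreeMonoid Bool) →ₐ[F]
      Matrix (Fin (k + 1)) (Fin (k + 1)) (MvPolynomial (SubVar k) F) :=
  MonoidAlgebra.lift F _ _ (FreeMonoid.lift (subMat F k))

namespace CEZ
open Classical in

/-- proof-free version of the exponent function. -/
def gexpN (n j : ℕ) (v : ℕ → ℕ) (i : ℕ) : ℕ :=
  (if i < j then v i + 1 else if i = j then n + 1 else 0)
    - (if i = 0 then 0 else if i - 1 < j then v (i - 1) + 1 else n + 1) - 1

def vOf {j n : ℕ} (J : Fin j → Fin n) : ℕ → ℕ :=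
  fun m => if h : m < j then (J ⟨m, h⟩ : ℕ) else 0

lemma vOf_lt {j n : ℕ} (J : Fin j → Fin n) {m : ℕ} (h : m < j) : vOf J m < n := by
  simp only [vOf, dif_pos h]; exact (J ⟨m, h⟩).isLt

def gexp (k n j : ℕ) (J : Fin j → Fin n) (i : Fin (k + 1)) : ℕ :=
  gexpN n j (vOf J) i

lemma xiExp_eq_gexpN (k D : ℕ) (I : Fin k → Fin D) (i : Fin (k + 1)) :
    xiExp k D I i = gexpN D k (vOf I) (i : ℕ) := by
  rcases i with ⟨iv, hi⟩
  have hik : iv ≤ k := by omega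
  unfold xiExp gexpN vOf
  simp only
  by_cases h1 : iv < k
  · rw [dif_pos h1, if_pos h1, dif_pos h1]
    by_cases h0 : iv = 0
    · subst h0; simp
    · rw [if_neg h0, dif_pos (show 0 < iv by omega), if_pos (show iv - 1 < k by omega),
        dif_pos (show iv - 1 < k by omega)]
  · have hik' : iv = k := by omega
    subst hik'
    rw [dif_neg h1, if_neg h1, if_pos rfl]
    by_cases h0 : iv = 0
    · subst h0; simp
    · rw [if_neg h0, dif_pos (show 0 < iv by omega), if_pos (show iv - 1 < iv by omega),
        dif_pos (show iv - 1 < iv by omega)]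

lemma gexpN_cast {n j : ℕ} {v : ℕ → ℕ} (hv : ∀ m < j, v m < n) (i : ℕ) :
    gexpN (n + 1) j v i = gexpN n j v i + (if i = j then 1 else 0) := by
  unfold gexpN
  rcases Nat.lt_or_ge (i - 1) j with h1 | h1
  · have hb := hv _ h1
    by_cases h2 : i < j
    · have hb2 := hv _ h2
      split_ifs <;> omega
    · split_ifs <;> omega
  · by_cases h2 : i < j
    · have hb2 := hv _ h2
      split_ifs <;> omega
    · split_ifs <;> omega

lemma gexpN_snoc {n j₀ : ℕ} {v v' : ℕ → ℕ} (hv : ∀ m < j₀, v m < n)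
    (hv' : ∀ m, v' m = if m < j₀ then v m else if m = j₀ then n else 0) (i : ℕ) :
    gexpN (n + 1) (j₀ + 1) v' i = gexpN n j₀ v i := by
  unfold gexpN
  have h1 := hv' i
  have h2 := hv' (i - 1)
  have h3 : i - 1 < j₀ → v (i-1) < n := fun h => hv _ h
  have h4 : i < j₀ → v i < n := fun h => hv _ h
  split_ifs at * <;> omega

lemma gexpN_inj {k n D : ℕ} (hk : 1 ≤ k) {vJ vI : ℕ → ℕ}
    (hJb : ∀ m < k, vJ m < n) (hIb : ∀ m < k, vI m < D)
    (hJm : ∀ m, m + 1 < k → vJ m < vJ (m + 1)) (hIm : ∀ m, m + 1 < k → vI m < vI (m + 1))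
    (h : ∀ i ≤ k, gexpN n k vJ i = gexpN D k vI i) :
    n = D ∧ ∀ m < k, vJ m = vI m := by
  have key : ∀ m, m < k → vJ m = vI m := by
    intro m
    induction m with
    | zero => intro hm; have := h 0 (by omega); unfold gexpN at this; simp [hm] at this; omega
    | succ m ih =>
      intro hm
      have hm' : m < k := by omega
      have e := h (m+1) (by omega)
      have e1 := ih hm'
      have e2 := hJm m hm
      have e3 := hIm m hm
      unfold gexpN at e
      rw [if_pos hm, if_pos hm, if_neg (Nat.succ_ne_zero m), if_neg (Nat.succ_ne_zero m),
        if_pos (show m + 1 - 1 < k by omega), if_pos (show m + 1 - 1 < k by omega)] at e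
      simp only [Nat.add_sub_cancel] at e
      omega
  refine ⟨?_, key⟩
  have e := h k le_rfl
  have e1 := key (k-1) (by omega)
  have e2 := hJb (k-1) (by omega)
  have e3 := hIb (k-1) (by omega)
  unfold gexpN at e
  rw [if_neg (lt_irrefl k), if_pos rfl, if_neg (lt_irrefl k), if_pos rfl,
    if_neg (show k ≠ 0 by omega), if_neg (show k ≠ 0 by omega),
    if_pos (show k - 1 < k by omega), if_pos (show k - 1 < k by omega)] at e
  omega

lemma Xi_apply_inl {k : ℕ} (e : Fin (k+1) → ℕ) (i : Fin (k+1)) :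
    (∑ i' : Fin (k+1), Finsupp.single (Sum.inl i' : SubVar k) (e i')) (Sum.inl i) = e i := by
  classical
  rw [Finset.sum_apply']
  rw [Finset.sum_eq_single i]
  · simp
  · intro b _ hb
    rw [Finsupp.single_apply, if_neg (by simpa using hb)]
  · simp

lemma Xi_apply_inr {k : ℕ} (e : Fin (k+1) → ℕ) (p : Bool × Fin k) :
    (∑ i' : Fin (k+1), Finsupp.single (Sum.inl i' : SubVar k) (e i')) (Sum.inr p) = 0 := by
  classical
  rw [Finset.sum_apply']
  apply Finset.sum_eq_zero
  intro i _
  rw [Finsupp.single_apply, if_neg (by simp)]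

lemma Y_apply_inl {k j : ℕ} (c : Fin j → Bool) (g : Fin j → Fin k) (i : Fin (k+1)) :
    (∑ ℓ : Fin j, Finsupp.single (Sum.inr (c ℓ, g ℓ) : SubVar k) 1) (Sum.inl i) = 0 := by
  classical
  rw [Finset.sum_apply']
  apply Finset.sum_eq_zero
  intro ℓ _
  rw [Finsupp.single_apply, if_neg (by simp)]

lemma Y_apply_inr {k : ℕ} (c : Fin k → Bool) (b : Bool) (m : Fin k) :
    (∑ ℓ : Fin k, Finsupp.single (Sum.inr (c ℓ, ℓ) : SubVar k) 1) (Sum.inr (b, m))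
      = if c m = b then 1 else 0 := by
  classical
  rw [Finset.sum_apply']
  rw [Finset.sum_eq_single m]
  · rw [Finsupp.single_apply]
    by_cases h : c m = b
    · rw [if_pos (by rw [h]), if_pos h]
    · rw [if_neg (by simp [Prod.ext_iff]; intro hh; exact absurd hh h), if_neg h]
  · intro ℓ _ hℓ
    rw [Finsupp.single_apply, if_neg (by simp [Prod.ext_iff]; intro _; exact hℓ)]
  · simp

lemma snoc_val {j₀ n : ℕ} (J' : Fin j₀ → Fin n) (m : ℕ) (h : m < j₀ + 1) :
    ((Fin.snoc (fun ℓ => (J' ℓ).castSucc) (Fin.last n) : Fin (j₀+1) → Fin (n+1)) ⟨m, h⟩ : ℕ)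
      = if h' : m < j₀ then (J' ⟨m, h'⟩ : ℕ) else n := by
  by_cases h' : m < j₀
  · have he : (⟨m, h⟩ : Fin (j₀+1)) = Fin.castSucc ⟨m, h'⟩ := rfl
    rw [he, Fin.snoc_castSucc, dif_pos h']
    simp
  · have hm : m = j₀ := by omega
    subst hm
    have he : (⟨m, h⟩ : Fin (m+1)) = Fin.last m := rfl
    rw [he, Fin.snoc_last, dif_neg h']
    simp

lemma strictMono_snoc {j₀ n : ℕ} (J' : Fin j₀ → Fin n) (hJ : StrictMono J') :
    StrictMono (Fin.snoc (fun ℓ => (J' ℓ).castSucc) (Fin.last n) : Fin (j₀+1) → Fin (n+1)) := by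
  intro a c hac
  rw [Fin.lt_iff_val_lt_val]
  have ha := snoc_val J' a a.isLt
  have hc := snoc_val J' c c.isLt
  simp only [Fin.eta] at ha hc
  rw [ha, hc]
  by_cases h1 : (a : ℕ) < j₀
  · rw [dif_pos h1]
    by_cases h2 : (c : ℕ) < j₀
    · rw [dif_pos h2]
      have : (⟨(a:ℕ), h1⟩ : Fin j₀) < ⟨(c:ℕ), h2⟩ := hac
      exact hJ this
    · rw [dif_neg h2]; exact (J' _).isLt
  · have : (a : ℕ) < j₀ := by
      have := a.isLt; have hcc := c.isLt
      have := (Fin.lt_iff_val_lt_val.mp hac)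
      omega
    exact absurd this h1

/-- monomial of a path -/
def monn (k n : ℕ) (w : List Bool) (hw : w.length = n) (j : ℕ) (hj : j ≤ k)
    (J : Fin j → Fin n) : SubVar k →₀ ℕ :=
  (∑ i : Fin (k + 1), Finsupp.single (Sum.inl i) (gexp k n j J i)) +
    ∑ ℓ : Fin j, Finsupp.single
      (Sum.inr (w.get (Fin.cast hw.symm (J ℓ)), ⟨(ℓ : ℕ), lt_of_lt_of_le ℓ.isLt hj⟩) : SubVar k) 1

lemma Xi_sum_ite {k : ℕ} (jF : Fin (k+1)) :
    (∑ i : Fin (k+1), Finsupp.single (Sum.inl i : SubVar k) (if i = jF then 1 else 0))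
      = Finsupp.single (Sum.inl jF) 1 := by
  classical
  have : ∀ i : Fin (k+1),
      Finsupp.single (Sum.inl i : SubVar k) (if i = jF then 1 else 0)
        = if i = jF then Finsupp.single (Sum.inl i : SubVar k) 1 else 0 := by
    intro i
    by_cases h : i = jF
    · rw [if_pos h, if_pos h]
    · rw [if_neg h, if_neg h, Finsupp.single_zero]
  rw [Finset.sum_congr rfl (fun i _ => this i), Finset.sum_ite_eq' Finset.univ jF]
  simp

lemma monn_cast {F : Type*} [Field F] {k n : ℕ} (w' : List Bool) (b : Bool)
    (hw' : w'.length = n) (hw : (w' ++ [b]).length = n + 1) (j : ℕ) (hj : j ≤ k)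
    (J : Fin j → Fin n) :
    monn k (n+1) (w' ++ [b]) hw j hj (fun ℓ => (J ℓ).castSucc)
      = monn k n w' hw' j hj J + Finsupp.single (Sum.inl (⟨j, by omega⟩ : Fin (k+1))) 1 := by
  classical
  unfold monn
  have hv : vOf (fun ℓ => (J ℓ).castSucc) = vOf J := by
    funext m
    unfold vOf
    by_cases h : m < j
    · rw [dif_pos h, dif_pos h]; simp
    · rw [dif_neg h, dif_neg h]
  have hgexp : ∀ i : Fin (k+1), gexp k (n+1) j (fun ℓ => (J ℓ).castSucc) i
      = gexp k n j J i + (if i = (⟨j, by omega⟩ : Fin (k+1)) then 1 else 0) := by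
    intro i
    unfold gexp
    rw [hv, gexpN_cast (fun m hm => vOf_lt J hm)]
    congr 1
    by_cases h : (i : ℕ) = j
    · rw [if_pos h, if_pos (Fin.ext h)]
    · rw [if_neg h, if_neg (fun hh => h (by rw [hh]))]
  have hXi : (∑ i : Fin (k+1), Finsupp.single (Sum.inl i : SubVar k)
        (gexp k (n+1) j (fun ℓ => (J ℓ).castSucc) i))
      = (∑ i : Fin (k+1), Finsupp.single (Sum.inl i : SubVar k) (gexp k n j J i))
        + Finsupp.single (Sum.inl (⟨j, by omega⟩ : Fin (k+1))) 1 := by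
    rw [Finset.sum_congr rfl (fun i _ => by rw [hgexp i, Finsupp.single_add]),
      Finset.sum_add_distrib, Xi_sum_ite]
  have hY : (∑ ℓ : Fin j, Finsupp.single
        (Sum.inr ((w' ++ [b]).get (Fin.cast hw.symm ((J ℓ).castSucc)),
          ⟨(ℓ : ℕ), lt_of_lt_of_le ℓ.isLt hj⟩) : SubVar k) 1)
      = ∑ ℓ : Fin j, Finsupp.single
          (Sum.inr (w'.get (Fin.cast hw'.symm (J ℓ)),
            ⟨(ℓ : ℕ), lt_of_lt_of_le ℓ.isLt hj⟩) : SubVar k) 1 := by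
    apply Finset.sum_congr rfl
    intro ℓ _
    have hg : (w' ++ [b]).get (Fin.cast hw.symm ((J ℓ).castSucc))
        = w'.get (Fin.cast hw'.symm (J ℓ)) := by
      rw [List.get_eq_getElem, List.get_eq_getElem]
      exact List.getElem_append_left (by rw [hw']; exact (J ℓ).isLt)
    rw [hg]
  rw [hXi, hY, add_right_comm]

lemma monn_snoc {F : Type*} [Field F] {k n : ℕ} (w' : List Bool) (b : Bool)
    (hw' : w'.length = n) (hw : (w' ++ [b]).length = n + 1) (j₀ : ℕ) (hj : j₀ + 1 ≤ k)
    (J : Fin j₀ → Fin n) :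
    monn k (n+1) (w' ++ [b]) hw (j₀+1) hj
        (Fin.snoc (fun ℓ => (J ℓ).castSucc) (Fin.last n))
      = monn k n w' hw' j₀ (by omega) J
        + Finsupp.single (Sum.inr (b, ⟨j₀, by omega⟩) : SubVar k) 1 := by
  classical
  unfold monn
  have hXi : (∑ i : Fin (k+1), Finsupp.single (Sum.inl i : SubVar k)
        (gexp k (n+1) (j₀+1) (Fin.snoc (fun ℓ => (J ℓ).castSucc) (Fin.last n)) i))
      = ∑ i : Fin (k+1), Finsupp.single (Sum.inl i : SubVar k) (gexp k n j₀ J i) := by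
    apply Finset.sum_congr rfl
    intro i _
    congr 1
    unfold gexp
    apply gexpN_snoc (fun m hm => vOf_lt J hm)
    intro m
    unfold vOf
    by_cases h : m < j₀ + 1
    · rw [dif_pos h, snoc_val]
      by_cases h' : m < j₀
      · rw [dif_pos h', if_pos h', dif_pos h']
      · rw [dif_neg h', if_neg h', if_pos (by omega)]
    · rw [dif_neg h, if_neg (by omega), if_neg (by omega)]
  have hY : (∑ ℓ : Fin (j₀+1), Finsupp.single
        (Sum.inr ((w' ++ [b]).get (Fin.cast hw.symm
            ((Fin.snoc (fun ℓ => (J ℓ).castSucc) (Fin.last n) : Fin (j₀+1) → Fin (n+1)) ℓ)),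
          ⟨(ℓ : ℕ), lt_of_lt_of_le ℓ.isLt hj⟩) : SubVar k) 1)
      = (∑ ℓ : Fin j₀, Finsupp.single
          (Sum.inr (w'.get (Fin.cast hw'.symm (J ℓ)),
            ⟨(ℓ : ℕ), lt_of_lt_of_le ℓ.isLt (by omega)⟩) : SubVar k) 1)
        + Finsupp.single (Sum.inr (b, ⟨j₀, by omega⟩) : SubVar k) 1 := by
    rw [Fin.sum_univ_castSucc]
    congr 1
    · apply Finset.sum_congr rfl
      intro ℓ _
      rw [Fin.snoc_castSucc]
      apply congrArg (fun x => Finsupp.single x 1)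
      apply congrArg
      refine Prod.ext_iff.mpr ⟨?_, ?_⟩
      · rw [List.get_eq_getElem, List.get_eq_getElem]
        exact List.getElem_append_left (by rw [hw']; exact (J ℓ).isLt)
      · apply Fin.ext; simp
    · rw [Fin.snoc_last]
      apply congrArg (fun x => Finsupp.single x 1)
      apply congrArg
      refine Prod.ext_iff.mpr ⟨?_, ?_⟩
      · rw [List.get_eq_getElem]
        exact List.getElem_concat_length (l := w') (a := b) (by simp [hw']) _
      · apply Fin.ext; simp
  rw [hXi, hY, add_assoc]

lemma mul_bidiag_zero {F : Type*} [Field F] {k : ℕ}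
    (A : Matrix (Fin (k+1)) (Fin (k+1)) (MvPolynomial (SubVar k) F)) (b : Bool) (i : Fin (k+1)) :
    (A * subMat F k b) i 0 = A i 0 * X (Sum.inl 0) := by
  rw [Matrix.mul_apply]
  rw [Finset.sum_eq_single (0 : Fin (k+1))]
  · simp [subMat]
  · intro j' _ hj'
    have h1 : j' ≠ (0 : Fin (k+1)) := hj'
    have h2 : ¬ ((j' : ℕ) + 1 = ((0 : Fin (k+1)) : ℕ)) := by simp
    simp [subMat, h1, h2]
  · simp

lemma mul_bidiag_succ {F : Type*} [Field F] {k : ℕ}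
    (A : Matrix (Fin (k+1)) (Fin (k+1)) (MvPolynomial (SubVar k) F)) (b : Bool) (i : Fin (k+1))
    (j₀ : ℕ) (hj₀ : j₀ + 1 < k + 1) :
    (A * subMat F k b) i ⟨j₀ + 1, hj₀⟩
      = A i ⟨j₀ + 1, hj₀⟩ * X (Sum.inl ⟨j₀ + 1, hj₀⟩)
        + A i ⟨j₀, by omega⟩ * X (Sum.inr (b, ⟨j₀, by omega⟩)) := by
  rw [Matrix.mul_apply]
  rw [← Finset.sum_subset (Finset.subset_univ {(⟨j₀ + 1, hj₀⟩ : Fin (k+1)), ⟨j₀, by omega⟩})]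
  · rw [Finset.sum_pair (by simp)]
    have h1 : (⟨j₀ + 1, hj₀⟩ : Fin (k+1)) ≠ ⟨j₀, by omega⟩ := by simp
    have h2 : (⟨j₀, by omega⟩ : Fin (k+1)) ≠ ⟨j₀ + 1, hj₀⟩ := by simp
    simp [subMat, h1, h2]
  · intro j' _ hj'
    simp only [Finset.mem_insert, Finset.mem_singleton] at hj'
    push_neg at hj'
    have h1 : j' ≠ (⟨j₀ + 1, hj₀⟩ : Fin (k+1)) := hj'.1
    have h2 : ¬ ((j' : ℕ) + 1 = j₀ + 1) := by
      intro h
      have h3 : (j' : ℕ) = j₀ := by omega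
      exact hj'.2 (Fin.ext (by simp [h3]))
    simp [subMat, h1, h2]
    intro h3
    exact absurd (Fin.ext h3) hj'.2

lemma X_eq {F : Type*} [Field F] {k : ℕ} (s : SubVar k) :
    (X s : MvPolynomial (SubVar k) F) = monomial (Finsupp.single s 1) 1 := rfl

open Classical in
lemma part1 {F : Type*} [Field F] {k n j : ℕ} (hj : j ≤ k) (w' : List Bool) (b : Bool)
    (hw' : w'.length = n) (hw : (w' ++ [b]).length = n + 1) :
    (∑ J ∈ Finset.univ.filter (fun J : Fin j → Fin n => StrictMono J),
        monomial (R := F) (monn k n w' hw' j hj J) 1) * X (Sum.inl (⟨j, by omega⟩ : Fin (k+1)))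
      = ∑ J ∈ Finset.univ.filter
          (fun J : Fin j → Fin (n+1) => StrictMono J ∧ ∀ ℓ, (J ℓ : ℕ) < n),
          monomial (monn k (n+1) (w' ++ [b]) hw j hj J) 1 := by
  rw [Finset.sum_mul]
  apply Finset.sum_bij (i := fun (J : Fin j → Fin n) _ => fun ℓ => (J ℓ).castSucc)
  · intro J hJ
    simp only [Finset.mem_filter, Finset.mem_univ, true_and] at hJ ⊢
    constructor
    · intro a c hac
      simpa [Fin.castSucc_lt_castSucc_iff] using hJ hac
    · intro ℓ; simpa using (J ℓ).isLt
  · intro J₁ h₁ J₂ h₂ he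
    funext ℓ
    exact Fin.castSucc_inj.mp (congrFun he ℓ)
  · intro J hJ
    simp only [Finset.mem_filter, Finset.mem_univ, true_and] at hJ
    refine ⟨fun ℓ => ⟨(J ℓ : ℕ), hJ.2 ℓ⟩, ?_, ?_⟩
    · simp only [Finset.mem_filter, Finset.mem_univ, true_and]
      intro a c hac
      have := hJ.1 hac
      rw [Fin.lt_iff_val_lt_val] at this ⊢
      exact this
    · funext ℓ; apply Fin.ext; rfl
  · intro J hJ
    rw [X_eq, monomial_mul, mul_one, ← monn_cast (F := F) w' b hw' hw j hj J]

open Classical in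
lemma part2 {F : Type*} [Field F] {k n j₀ : ℕ} (hj : j₀ + 1 ≤ k) (w' : List Bool) (b : Bool)
    (hw' : w'.length = n) (hw : (w' ++ [b]).length = n + 1) :
    (∑ J ∈ Finset.univ.filter (fun J : Fin j₀ → Fin n => StrictMono J),
        monomial (R := F) (monn k n w' hw' j₀ (by omega) J) 1)
        * X (Sum.inr (b, ⟨j₀, by omega⟩) : SubVar k)
      = ∑ J ∈ Finset.univ.filter
          (fun J : Fin (j₀+1) → Fin (n+1) => StrictMono J ∧ ¬ ∀ ℓ, (J ℓ : ℕ) < n),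
          monomial (monn k (n+1) (w' ++ [b]) hw (j₀+1) hj J) 1 := by
  rw [Finset.sum_mul]
  apply Finset.sum_bij
    (i := fun (J : Fin j₀ → Fin n) _ => Fin.snoc (fun ℓ => (J ℓ).castSucc) (Fin.last n))
  · intro J hJ
    simp only [Finset.mem_filter, Finset.mem_univ, true_and] at hJ ⊢
    refine ⟨strictMono_snoc J hJ, fun hP => ?_⟩
    have := hP (Fin.last j₀)
    rw [Fin.snoc_last] at this
    simp at this
  · intro J₁ h₁ J₂ h₂ he
    funext ℓ
    have := congrFun he ℓ.castSucc
    rw [Fin.snoc_castSucc, Fin.snoc_castSucc] at this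
    exact Fin.castSucc_inj.mp this
  · intro J hJ
    simp only [Finset.mem_filter, Finset.mem_univ, true_and] at hJ
    obtain ⟨hSM, hnP⟩ := hJ
    push_neg at hnP
    obtain ⟨ℓ₀, hℓ₀⟩ := hnP
    have hlast : J (Fin.last j₀) = Fin.last n := by
      have h1 : (J ℓ₀ : ℕ) = n := by have := (J ℓ₀).isLt; omega
      have h2 : (J ℓ₀ : ℕ) ≤ (J (Fin.last j₀) : ℕ) := by
        exact Fin.le_iff_val_le_val.mp (hSM.monotone (Fin.le_last ℓ₀))
      have h3 := (J (Fin.last j₀)).isLt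
      apply Fin.ext
      simp only [Fin.val_last]
      omega
    have hlt : ∀ ℓ : Fin j₀, (J ℓ.castSucc : ℕ) < n := by
      intro ℓ
      have := hSM (Fin.castSucc_lt_last ℓ)
      rw [hlast] at this
      simpa [Fin.lt_iff_val_lt_val] using this
    refine ⟨fun ℓ => ⟨(J ℓ.castSucc : ℕ), hlt ℓ⟩, ?_, ?_⟩
    · simp only [Finset.mem_filter, Finset.mem_univ, true_and]
      intro a c hac
      have : a.castSucc < c.castSucc := Fin.castSucc_lt_castSucc_iff.mpr hac
      have := hSM this
      rw [Fin.lt_iff_val_lt_val] at this ⊢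
      exact this
    · funext ℓ
      refine Fin.lastCases ?_ ?_ ℓ
      · rw [Fin.snoc_last, hlast]
      · intro m
        rw [Fin.snoc_castSucc]
        apply Fin.ext; rfl
  · intro J hJ
    rw [X_eq, monomial_mul, mul_one, ← monn_snoc (F := F) w' b hw' hw j₀ hj J]

open Classical in
lemma expand {F : Type*} [Field F] {k : ℕ} :
    ∀ (n : ℕ) (w : List Bool) (hw : w.length = n) (j : ℕ) (hj : j < k + 1),
    (w.map (subMat F k)).prod 0 ⟨j, hj⟩
      = ∑ J ∈ Finset.univ.filter (fun J : Fin j → Fin n => StrictMono J),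
          monomial (monn k n w hw j (Nat.lt_succ_iff.mp hj) J) 1 := by
  intro n
  induction n with
  | zero =>
    intro w hw j hj
    have hwnil : w = [] := List.length_eq_zero_iff.mp hw
    subst hwnil
    simp only [List.map_nil, List.prod_nil]
    by_cases hj0 : j = 0
    · subst hj0
      rw [show (⟨0, hj⟩ : Fin (k+1)) = 0 from rfl, Matrix.one_apply_eq]
      have hfilter : (Finset.univ.filter (fun J : Fin 0 → Fin 0 => StrictMono J))
          = Finset.univ := by
        apply Finset.filter_true_of_mem
        intro J _ a
        exact a.elim0
      rw [hfilter, Finset.univ_unique, Finset.sum_singleton]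
      have hg : ∀ i : Fin (k+1), gexp k 0 0 (default : Fin 0 → Fin 0) i = 0 := by
        intro i
        unfold gexp gexpN
        split_ifs <;> omega
      have hmz : monn k 0 [] hw 0 (by omega) (default : Fin 0 → Fin 0) = 0 := by
        unfold monn
        simp [hg]
      rw [hmz]
      simp [monomial_zero']
    · rw [Matrix.one_apply_ne (by
        intro h
        exact hj0 (by have := congrArg Fin.val h; simpa using this.symm))]
      symm
      apply Finset.sum_eq_zero
      intro J hJ
      exact (J ⟨0, Nat.pos_of_ne_zero hj0⟩).elim0
  | succ n ih =>
    intro w hw j hj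
    induction w using List.reverseRecOn with
    | nil => simp at hw
    | append_singleton w' b _ =>
      have hw' : w'.length = n := by simp at hw; omega
      rw [List.map_append, List.prod_append]
      simp only [List.map_cons, List.map_nil, List.prod_cons, List.prod_nil, mul_one]
      rw [← Finset.sum_filter_add_sum_filter_not
        (Finset.univ.filter (fun J : Fin j → Fin (n+1) => StrictMono J))
        (fun J => ∀ ℓ, (J ℓ : ℕ) < n), Finset.filter_filter, Finset.filter_filter]
      cases j with
      | zero =>
        have h0 : (⟨0, hj⟩ : Fin (k+1)) = 0 := rfl
        rw [h0, mul_bidiag_zero]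
        have ih0 := ih w' hw' 0 hj
        rw [h0] at ih0
        rw [ih0]
        have h2 : (∑ J ∈ Finset.univ.filter
            (fun J : Fin 0 → Fin (n+1) => StrictMono J ∧ ¬ ∀ ℓ, (J ℓ : ℕ) < n),
            monomial (R := F) (monn k (n+1) (w' ++ [b]) hw 0 (by omega) J) 1) = 0 := by
          apply Finset.sum_eq_zero
          intro J hJ
          simp only [Finset.mem_filter, Finset.mem_univ, true_and] at hJ
          obtain ⟨ℓ₀, _⟩ := not_forall.mp hJ.2
          exact ℓ₀.elim0
        rw [h2, add_zero]
        exact part1 (Nat.lt_succ_iff.mp hj) w' b hw' hw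
      | succ j₀ =>
        rw [mul_bidiag_succ _ b _ j₀ hj]
        rw [ih w' hw' (j₀+1) hj, ih w' hw' j₀ (by omega)]
        rw [part1 (Nat.lt_succ_iff.mp hj) w' b hw' hw,
          part2 (Nat.lt_succ_iff.mp hj) w' b hw' hw]

lemma monn_apply_inl {k n : ℕ} (w : List Bool) (hw : w.length = n) (hj : k ≤ k)
    (J : Fin k → Fin n) (i : Fin (k+1)) :
    monn k n w hw k hj J (Sum.inl i) = gexpN n k (vOf J) (i : ℕ) := by
  unfold monn
  rw [Finsupp.add_apply, Xi_apply_inl]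
  have hY : (∑ ℓ : Fin k, Finsupp.single
      (Sum.inr (w.get (Fin.cast hw.symm (J ℓ)), ⟨(ℓ : ℕ), lt_of_lt_of_le ℓ.isLt hj⟩) : SubVar k) 1)
      (Sum.inl i) = 0 :=
    Y_apply_inl (fun ℓ => w.get (Fin.cast hw.symm (J ℓ)))
      (fun ℓ => ⟨(ℓ : ℕ), lt_of_lt_of_le ℓ.isLt hj⟩) i
  rw [hY, add_zero]
  rfl

lemma monn_apply_inr {k n : ℕ} (w : List Bool) (hw : w.length = n) (hj : k ≤ k)
    (J : Fin k → Fin n) (b : Bool) (m : Fin k) :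
    monn k n w hw k hj J (Sum.inr (b, m))
      = if w.get (Fin.cast hw.symm (J m)) = b then 1 else 0 := by
  unfold monn
  rw [Finsupp.add_apply, Xi_apply_inr, zero_add]
  exact Y_apply_inr (fun ℓ => w.get (Fin.cast hw.symm (J ℓ))) b m

open Classical in
lemma coeff_word {F : Type*} [Field F] {k : ℕ} (hk : 1 ≤ k) (D : ℕ)
    (w₁ : List Bool) (hw₁ : w₁.length = D) (I : Fin k → Fin D) (hI : StrictMono I)
    (w : List Bool) :
    MvPolynomial.coeff
        ((∑ i : Fin (k + 1), Finsupp.single (Sum.inl i : SubVar k) (xiExp k D I i)) +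
          ∑ ℓ : Fin k, Finsupp.single
            (Sum.inr (w₁.get (Fin.cast hw₁.symm (I ℓ)), ℓ) : SubVar k) 1)
        ((w.map (subMat F k)).prod 0 (Fin.last k))
      = if h : w.length = D then
          (if ∀ ℓ : Fin k, w.get (Fin.cast h.symm (I ℓ)) = w₁.get (Fin.cast hw₁.symm (I ℓ))
            then 1 else 0)
        else 0 := by
  set μ : SubVar k →₀ ℕ :=
    (∑ i : Fin (k + 1), Finsupp.single (Sum.inl i : SubVar k) (xiExp k D I i)) +
      ∑ ℓ : Fin k, Finsupp.single
        (Sum.inr (w₁.get (Fin.cast hw₁.symm (I ℓ)), ℓ) : SubVar k) 1 with hμ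
  have hμ_inl : ∀ i : Fin (k+1), μ (Sum.inl i) = gexpN D k (vOf I) (i : ℕ) := by
    intro i
    rw [hμ, Finsupp.add_apply, Xi_apply_inl,
      Y_apply_inl (fun ℓ => w₁.get (Fin.cast hw₁.symm (I ℓ))) (fun ℓ => ℓ) i, add_zero,
      xiExp_eq_gexpN]
  have hμ_inr : ∀ (b : Bool) (m : Fin k),
      μ (Sum.inr (b, m)) = if w₁.get (Fin.cast hw₁.symm (I m)) = b then 1 else 0 := by
    intro b m
    rw [hμ, Finsupp.add_apply, Xi_apply_inr, zero_add]
    exact Y_apply_inr (fun ℓ => w₁.get (Fin.cast hw₁.symm (I ℓ))) b m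
  have hkk : k < k + 1 := Nat.lt_succ_self k
  rw [show (Fin.last k) = ⟨k, hkk⟩ from rfl, expand w.length w rfl k hkk, coeff_sum]
  have hiff : ∀ J : Fin k → Fin w.length, StrictMono J →
      ((monn k w.length w rfl k (Nat.lt_succ_iff.mp hkk) J) = μ
        ↔ (w.length = D ∧ (∀ ℓ : Fin k, (J ℓ : ℕ) = (I ℓ : ℕ))
            ∧ ∀ ℓ : Fin k, w.get (J ℓ) = w₁.get (Fin.cast hw₁.symm (I ℓ)))) := by
    intro J hJ
    constructor
    · intro h
      have hinl : ∀ i ≤ k, gexpN w.length k (vOf J) i = gexpN D k (vOf I) i := by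
        intro i hik
        have h1 := congrArg (fun g : SubVar k →₀ ℕ => g (Sum.inl ⟨i, by omega⟩)) h
        rw [monn_apply_inl, hμ_inl] at h1
        exact h1
      have hJm : ∀ m, m + 1 < k → vOf J m < vOf J (m + 1) := by
        intro m hm
        have := hJ (show (⟨m, by omega⟩ : Fin k) < ⟨m+1, hm⟩ from
          Fin.mk_lt_mk.mpr (Nat.lt_succ_self m))
        rw [Fin.lt_iff_val_lt_val] at this
        unfold vOf
        rw [dif_pos (show m < k by omega), dif_pos hm]
        exact this
      have hIm : ∀ m, m + 1 < k → vOf I m < vOf I (m + 1) := by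
        intro m hm
        have := hI (show (⟨m, by omega⟩ : Fin k) < ⟨m+1, hm⟩ from
          Fin.mk_lt_mk.mpr (Nat.lt_succ_self m))
        rw [Fin.lt_iff_val_lt_val] at this
        unfold vOf
        rw [dif_pos (show m < k by omega), dif_pos hm]
        exact this
      obtain ⟨hnD, hvals⟩ := gexpN_inj hk (fun m hm => vOf_lt J hm) (fun m hm => vOf_lt I hm)
        hJm hIm hinl
      have hvals' : ∀ ℓ : Fin k, (J ℓ : ℕ) = (I ℓ : ℕ) := by
        intro ℓ
        have := hvals ℓ ℓ.isLt
        unfold vOf at this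
        rw [dif_pos ℓ.isLt, dif_pos ℓ.isLt] at this
        simpa using this
      refine ⟨hnD, hvals', ?_⟩
      intro ℓ
      have h1 := congrArg (fun g : SubVar k →₀ ℕ => g
        (Sum.inr (w₁.get (Fin.cast hw₁.symm (I ℓ)), ℓ))) h
      rw [monn_apply_inr, hμ_inr, if_pos rfl] at h1
      by_contra hc
      rw [if_neg (by simpa using hc)] at h1
      exact one_ne_zero h1.symm
    · rintro ⟨hnD, hvals, hy⟩
      apply Finsupp.ext
      intro s
      rcases s with i | ⟨b, m⟩
      · rw [monn_apply_inl, hμ_inl]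
        have hveq : vOf J = vOf I := by
          funext m
          unfold vOf
          by_cases hm : m < k
          · rw [dif_pos hm, dif_pos hm]
            have := hvals ⟨m, hm⟩
            simpa using this
          · rw [dif_neg hm, dif_neg hm]
        rw [hveq, hnD]
      · rw [monn_apply_inr, hμ_inr]
        have h2 := hy m
        simp only [Fin.cast_refl, id_eq] at h2 ⊢
        rw [h2]
  rw [Finset.sum_congr rfl (fun J hJ => coeff_monomial μ _ (1:F))]
  by_cases hD : w.length = D
  · set I' : Fin k → Fin w.length := fun ℓ => Fin.cast hD.symm (I ℓ) with hI'
    have hI'mem : I' ∈ Finset.univ.filter (fun J : Fin k → Fin w.length => StrictMono J) := by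
      simp only [Finset.mem_filter, Finset.mem_univ, true_and]
      intro a c hac
      have := hI hac
      rw [Fin.lt_iff_val_lt_val] at this ⊢
      simpa [hI'] using this
    have hterm : ∀ J ∈ Finset.univ.filter (fun J : Fin k → Fin w.length => StrictMono J),
        (if monn k w.length w rfl k (Nat.lt_succ_iff.mp hkk) J = μ then (1:F) else 0)
          = if J = I' then
              (if ∀ ℓ : Fin k, w.get (I' ℓ) = w₁.get (Fin.cast hw₁.symm (I ℓ)) then (1:F) else 0)
            else 0 := by
      intro J hJ
      simp only [Finset.mem_filter, Finset.mem_univ, true_and] at hJ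
      rw [if_congr (hiff J hJ) rfl rfl]
      by_cases hJI : J = I'
      · rw [hJI, if_pos rfl]
        have hc : (w.length = D ∧ (∀ ℓ : Fin k, (I' ℓ : ℕ) = (I ℓ : ℕ))
              ∧ ∀ ℓ : Fin k, w.get (I' ℓ) = w₁.get (Fin.cast hw₁.symm (I ℓ)))
            ↔ (∀ ℓ : Fin k, w.get (I' ℓ) = w₁.get (Fin.cast hw₁.symm (I ℓ))) := by
          constructor
          · exact fun h => h.2.2
          · intro h
            refine ⟨hD, fun ℓ => ?_, h⟩
            simp only [hI', Fin.coe_cast]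
        rw [if_congr hc rfl rfl]
      · rw [if_neg hJI, if_neg]
        rintro ⟨_, hvals, _⟩
        exact hJI (funext fun ℓ => Fin.ext (by simpa [hI'] using hvals ℓ))
    rw [Finset.sum_congr rfl hterm, Finset.sum_ite_eq' _ I'
      (fun _ => if ∀ ℓ : Fin k, w.get (I' ℓ) = w₁.get (Fin.cast hw₁.symm (I ℓ))
        then (1:F) else 0), if_pos hI'mem]
    rw [dif_pos hD]
  · rw [dif_neg hD]
    apply Finset.sum_eq_zero
    intro J hJ
    simp only [Finset.mem_filter, Finset.mem_univ, true_and] at hJ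
    rw [if_neg]
    intro h
    exact hD ((hiff J hJ).mp h).1

end CEZ

open CEZ

/-- If `w₁` is a word of maximal length `D` in the support of `f` and `I` is an isolating
increasing `k`-sequence for it among the degree-`D` words of `f`, then the coefficient of
the monomial `ξ_I · y_{b_{i₁},1} ⋯ y_{b_{i_k},k}` (determined by `w₁` and `I`) in the
`(1, k+1)` entry of `f(M_{x₀}, M_{x₁})` equals the coefficient of `w₁` in `f`; in
particular that entry is a nonzero polynomial. -/
theorem corner_entry_ne_zero (F : Type*) [Field F] (k : ℕ) (hk : 1 ≤ k)
    (f : MonoidAlgebra F (FreeMonoid Bool)) (hf : f ≠ 0)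
    (D : ℕ) (hD : D = f.coeff.support.sup fun w => w.length)
    (w₁ : FreeMonoid Bool) (hw₁ : w₁ ∈ f.coeff.support)
    (hlen : (FreeMonoid.toList w₁).length = D)
    (I : Fin k → Fin D) (hI : StrictMono I)
    (hiso : ∀ w ∈ f.coeff.support, ∀ hw : (FreeMonoid.toList w).length = D, w ≠ w₁ →
      ∃ ℓ : Fin k, (FreeMonoid.toList w).get (Fin.cast hw.symm (I ℓ))
        ≠ (FreeMonoid.toList w₁).get (Fin.cast hlen.symm (I ℓ))) :
    MvPolynomial.coeff
        ((∑ i : Fin (k + 1), Finsupp.single (Sum.inl i : SubVar k) (xiExp k D I i)) +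
          ∑ ℓ : Fin k, Finsupp.single
            (Sum.inr ((FreeMonoid.toList w₁).get (Fin.cast hlen.symm (I ℓ)), ℓ) : SubVar k) 1)
        (evalSub F k f 0 (Fin.last k)) = f.coeff w₁
      ∧ evalSub F k f 0 (Fin.last k) ≠ 0 := by
  classical
  have hentry : evalSub F k f 0 (Fin.last k)
      = ∑ w ∈ f.coeff.support,
          f.coeff w • ((FreeMonoid.toList w).map (subMat F k)).prod 0 (Fin.last k) := by
    unfold evalSub
    rw [MonoidAlgebra.lift_apply, Finsupp.sum, Matrix.sum_apply]
    apply Finset.sum_congr rfl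
    intro w _
    rw [Matrix.smul_apply, FreeMonoid.lift_apply]
  have hc : MvPolynomial.coeff
      ((∑ i : Fin (k + 1), Finsupp.single (Sum.inl i : SubVar k) (xiExp k D I i)) +
        ∑ ℓ : Fin k, Finsupp.single
          (Sum.inr ((FreeMonoid.toList w₁).get (Fin.cast hlen.symm (I ℓ)), ℓ) : SubVar k) 1)
      (evalSub F k f 0 (Fin.last k)) = f.coeff w₁ := by
    rw [hentry, coeff_sum]
    rw [Finset.sum_congr rfl (fun w _ => by
      rw [MvPolynomial.coeff_smul, smul_eq_mul,
        coeff_word hk D (FreeMonoid.toList w₁) hlen I hI (FreeMonoid.toList w)])]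
    rw [Finset.sum_eq_single_of_mem w₁ hw₁]
    · rw [dif_pos hlen, if_pos (fun ℓ => rfl), mul_one]
    · intro w hw hne
      by_cases hlw : (FreeMonoid.toList w).length = D
      · rw [dif_pos hlw, if_neg, mul_zero]
        intro hall
        obtain ⟨ℓ, hℓ⟩ := hiso w hw hlw hne
        exact hℓ (hall ℓ)
      · rw [dif_neg hlw, mul_zero]
  refine ⟨hc, ?_⟩
  intro h0
  rw [h0, MvPolynomial.coeff_zero] at hc
  exact (Finsupp.mem_support_iff.mp hw₁) hc.symm

end
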